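/- arXiv:2306.17781 — 5 statements merged into one kernel-verified Lean document; each statement's English description precedes it below -/
import Mathlib

section
/- For every real number α > 1, lim_{m→∞} σ_α(m!)/(m!)^α = ζ(α). -/
open Filter Topology Finset

noncomputable def sigmaR (α : ℝ) (m : ℕ) : ℝ := ∑ d ∈ m.divisors, (d : ℝ) ^ α

noncomputable def zetaR (α : ℝ) : ℝ := ∑' k : ℕ, ((k : ℝ) + 1) ^ (-α)

theorem stmt_1 (α : ℝ) (hα : 1 < α) :
    Tendsto (fun m : ℕ => sigmaR α (m.factorial) / ((m.factorial : ℝ)) ^ α)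
      atTop (𝓝 (zetaR α)) := by
  set F : ℕ → ℝ := fun k => ((k : ℝ) + 1) ^ (-α) with hF
  have hFnn : ∀ k, 0 ≤ F k := fun k => Real.rpow_nonneg (by positivity) _
  have hS : Summable F := by
    have h1 : Summable (fun n : ℕ => (n : ℝ) ^ (-α)) :=
      Real.summable_nat_rpow.mpr (by linarith)
    have := (summable_nat_add_iff 1).mpr h1
    refine this.congr fun n => ?_
    push_cast
    ring_nf
    simp only [hF]
    ring_nf
  have key : ∀ n : ℕ, 0 < n →
      sigmaR α n / (n : ℝ) ^ α = ∑ d ∈ n.divisors, (d : ℝ) ^ (-α) := by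
    intro n hn
    have hnR : (0:ℝ) < (n:ℝ) := by exact_mod_cast hn
    have hn' : (0:ℝ) < (n:ℝ) ^ α := Real.rpow_pos_of_pos hnR α
    have h0 : sigmaR α n = ∑ d ∈ n.divisors, ((n / d : ℕ) : ℝ) ^ α :=
      (Nat.sum_div_divisors n _).symm
    rw [h0, Finset.sum_div]
    apply Finset.sum_congr rfl
    intro d hd
    have hdvd : d ∣ n := (Nat.mem_divisors.mp hd).1
    have hd0 : 0 < d := Nat.pos_of_mem_divisors hd
    have hdR : (0:ℝ) < (d:ℝ) := by exact_mod_cast hd0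
    have hcast : ((n / d : ℕ) : ℝ) = (n : ℝ) / d :=
      Nat.cast_div hdvd (by exact_mod_cast hd0.ne')
    have hdα : (0:ℝ) < (d:ℝ) ^ α := Real.rpow_pos_of_pos hdR α
    rw [hcast, Real.div_rpow hnR.le hdR.le, Real.rpow_neg hdR.le,
      div_right_comm, div_self hn'.ne', one_div]
  have heq : ∀ m : ℕ, sigmaR α (m.factorial) / ((m.factorial : ℝ)) ^ α
      = ∑ d ∈ (m.factorial).divisors, (d : ℝ) ^ (-α) :=
    fun m => key _ m.factorial_pos
  have hlow : ∀ m : ℕ, ∑ i ∈ range m, F i ≤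
      sigmaR α (m.factorial) / ((m.factorial : ℝ)) ^ α := by
    intro m
    rw [heq m]
    have himg : (range m).image (fun x : ℕ => x + 1) ⊆ (m.factorial).divisors := by
      intro d hd
      simp only [Finset.mem_image, Finset.mem_range] at hd
      obtain ⟨j, hj, rfl⟩ := hd
      exact Nat.mem_divisors.mpr ⟨Nat.dvd_factorial (Nat.succ_pos j) hj, m.factorial_ne_zero⟩
    calc ∑ i ∈ range m, F i
        = ∑ d ∈ (range m).image (fun x : ℕ => x + 1), (d : ℝ) ^ (-α) := by
          rw [Finset.sum_image (by intro a _ b _ h; simp only at h; omega)]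
          apply Finset.sum_congr rfl
          intro i _
          simp only [hF]
          push_cast
          ring_nf
      _ ≤ ∑ d ∈ (m.factorial).divisors, (d : ℝ) ^ (-α) :=
          Finset.sum_le_sum_of_subset_of_nonneg himg
            (fun d _ _ => Real.rpow_nonneg (by positivity) _)
  have hup : ∀ m : ℕ, sigmaR α (m.factorial) / ((m.factorial : ℝ)) ^ α ≤ zetaR α := by
    intro m
    rw [heq m, zetaR]
    have hrw : ∑ d ∈ (m.factorial).divisors, (d : ℝ) ^ (-α)
        = ∑ k ∈ (m.factorial).divisors.image (fun d : ℕ => d - 1), F k := by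
      rw [Finset.sum_image (by
        intro a ha b hb h
        have ha1 := Nat.pos_of_mem_divisors ha
        have hb1 := Nat.pos_of_mem_divisors hb
        simp only at h
        omega)]
      apply Finset.sum_congr rfl
      intro d hd
      have hd1 := Nat.pos_of_mem_divisors hd
      simp only [hF]
      congr 1
      have h2 : d - 1 + 1 = d := by omega
      rw [← h2]
      push_cast
      ring
    rw [hrw]
    exact Summable.sum_le_tsum _ (fun i _ => hFnn i) hS
  exact tendsto_of_tendsto_of_tendsto_of_le_of_le hS.hasSum.tendsto_sum_nat
    tendsto_const_nhds hlow hup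
end

section
/- For every real number α > 1, lim_{m→∞} σ_α(L_m)/(L_m)^α = ζ(α), where L_m = lcm(1,2,…,m). -/
open Filter Topology

/-- L_m = lcm(1,2,…,m) -/
def Lm (m : ℕ) : ℕ := (Finset.Icc 1 m).lcm id

lemma Lm_ne_zero (m : ℕ) : Lm m ≠ 0 := by
  rw [Lm]
  induction m with
  | zero => simp
  | succ n ih =>
    rcases Nat.eq_zero_or_pos n with h | h
    · subst h; simp [Finset.lcm]
    · have hins : Finset.Icc 1 (n+1) = insert (n+1) (Finset.Icc 1 n) := by
        ext x; simp only [Finset.mem_Icc, Finset.mem_insert]; omega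
      rw [hins]
      rw [Finset.lcm_insert]
      simp only [id]
      exact Nat.lcm_ne_zero (by omega) ih

lemma summandble (α : ℝ) (hα : 1 < α) : Summable (fun k : ℕ => ((k : ℝ) + 1) ^ (-α)) := by
  have := (Real.summable_nat_rpow (p := -α)).2 (by linarith)
  have h2 := (summable_nat_add_iff 1).2 this
  simpa using h2

lemma key (α : ℝ) (n : ℕ) (hn : n ≠ 0) :
    sigmaR α n / (n : ℝ) ^ α = ∑ d ∈ n.divisors, (d : ℝ) ^ (-α) := by
  have hn' : (0:ℝ) < (n:ℝ) := by positivity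
  rw [sigmaR, ← Nat.sum_div_divisors n (fun d => (d:ℝ)^α), Finset.sum_div]
  apply Finset.sum_congr rfl
  intro d hd
  have hdvd : d ∣ n := (Nat.mem_divisors.mp hd).1
  have hd0 : 0 < d := Nat.pos_of_mem_divisors hd
  have hd0' : (0:ℝ) < (d:ℝ) := by positivity
  rw [Nat.cast_div hdvd (by positivity), Real.div_rpow hn'.le hd0'.le,
    Real.rpow_neg hd0'.le]
  field_simp

theorem stmt_2 (α : ℝ) (hα : 1 < α) :
    Tendsto (fun m : ℕ => sigmaR α (Lm m) / ((Lm m : ℝ)) ^ α)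
      atTop (𝓝 (zetaR α)) := by
  have hsum := summandble α hα
  have hlow : Tendsto (fun m : ℕ => ∑ k ∈ Finset.range m, ((k : ℝ) + 1) ^ (-α))
      atTop (𝓝 (zetaR α)) := hsum.hasSum.tendsto_sum_nat
  apply tendsto_of_tendsto_of_tendsto_of_le_of_le hlow tendsto_const_nhds
  · intro m
    simp only []
    rw [key α (Lm m) (Lm_ne_zero m)]
    have himg : Finset.Icc 1 m = (Finset.range m).image (· + 1) := by
      ext x
      simp only [Finset.mem_Icc, Finset.mem_image, Finset.mem_range]
      constructor
      · rintro ⟨h1, h2⟩; exact ⟨x - 1, by omega, by omega⟩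
      · rintro ⟨a, ha, rfl⟩; omega
    have : ∑ k ∈ Finset.range m, ((k : ℝ) + 1) ^ (-α)
        = ∑ d ∈ Finset.Icc 1 m, (d : ℝ) ^ (-α) := by
      rw [himg, Finset.sum_image (fun a _ b _ h => by simpa using h)]
      push_cast
      rfl
    rw [this]
    apply Finset.sum_le_sum_of_subset_of_nonneg
    · intro d hd
      rw [Finset.mem_Icc] at hd
      rw [Nat.mem_divisors]
      exact ⟨Finset.dvd_lcm (by simp [Finset.mem_Icc]; omega), Lm_ne_zero m⟩
    · intros; positivity
  · intro m
    simp only []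
    rw [key α (Lm m) (Lm_ne_zero m), zetaR]
    have hinj : ∀ d ∈ (Lm m).divisors, ∀ d' ∈ (Lm m).divisors, d - 1 = d' - 1 → d = d' := by
      intro d hd d' hd' h
      have := Nat.pos_of_mem_divisors hd
      have := Nat.pos_of_mem_divisors hd'
      omega
    calc ∑ d ∈ (Lm m).divisors, (d : ℝ) ^ (-α)
        = ∑ k ∈ (Lm m).divisors.image (· - 1), (((k:ℕ):ℝ) + 1) ^ (-α) := by
          rw [Finset.sum_image hinj]
          apply Finset.sum_congr rfl
          intro d hd
          have := Nat.pos_of_mem_divisors hd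
          congr 1
          push_cast [Nat.cast_sub this]
          ring
      _ ≤ zetaR α := by
          rw [zetaR]
          exact Summable.sum_le_tsum _ (fun _ _ => by positivity) hsum
end

section
/- Let φ_n(x) = √(nπ) cos^{2n}(πx). If f ∈ L¹[0,1] is continuous at 0 and at 1, then lim_{n→∞} ∫_0^1 f(x) φ_n(x) dx = (f(0) + f(1))/2. -/
open Filter Topology Real MeasureTheory

noncomputable def auxA (n : ℕ) : ℝ :=
  ∏ i ∈ Finset.range n, (2 * (i : ℝ) + 1) / (2 * i + 2)

lemma auxA_pos (n : ℕ) : 0 < auxA n := by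
  apply Finset.prod_pos
  intro i _
  positivity

lemma auxA_mul_W (n : ℕ) : auxA n ^ 2 * (2 * n + 1) * Real.Wallis.W n = 1 := by
  induction n with
  | zero => simp [auxA, Real.Wallis.W]
  | succ k ih =>
      have h1 : (2 * (k:ℝ) + 1) ≠ 0 := by positivity
      have h2 : (2 * (k:ℝ) + 2) ≠ 0 := by positivity
      have h3 : (2 * (k:ℝ) + 3) ≠ 0 := by positivity
      rw [Real.Wallis.W_succ]
      have : auxA (k+1) = auxA k * ((2 * k + 1) / (2 * k + 2)) := Finset.prod_range_succ _ _
      rw [this]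
      push_cast
      field_simp
      linear_combination (2*(k:ℝ)+3) * ih

lemma tendsto_auxA_sq : Tendsto (fun n : ℕ => auxA n ^ 2 * (2 * n + 1)) atTop (𝓝 (2 / π)) := by
  have h : ∀ n : ℕ, auxA n ^ 2 * (2 * n + 1) = (Real.Wallis.W n)⁻¹ := by
    intro n
    have := auxA_mul_W n
    field_simp [ne_of_gt (Real.Wallis.W_pos n)]
    linarith
  simp only [h]
  have : (2 : ℝ) / π = (π / 2)⁻¹ := by
    rw [inv_div]
  rw [this]
  exact Real.Wallis.tendsto_W_nhds_pi_div_two.inv₀ (by positivity)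

lemma tendsto_npi_auxA_sq : Tendsto (fun n : ℕ => (n : ℝ) * π * auxA n ^ 2) atTop (𝓝 1) := by
  have hA : Tendsto (fun n : ℕ => 2 * (n : ℝ) + 1) atTop atTop :=
    tendsto_atTop_add_const_right atTop 1
      (tendsto_natCast_atTop_atTop.const_mul_atTop (two_pos : (0:ℝ) < 2))
  have h2 : Tendsto (fun n : ℕ => (n : ℝ) * π / (2 * n + 1)) atTop (𝓝 (π / 2)) := by
    have h0 : Tendsto (fun n : ℕ => π / 2 - (π / 2) / (2 * (n:ℝ) + 1)) atTop (𝓝 (π / 2 - 0)) :=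
      tendsto_const_nhds.sub (tendsto_const_nhds.div_atTop hA)
    rw [sub_zero] at h0
    refine h0.congr fun n => ?_
    have h1 : (2 * (n:ℝ) + 1) ≠ 0 := by positivity
    field_simp
    ring
  have := tendsto_auxA_sq.mul h2
  have heq : (2 / π) * (π / 2) = (1:ℝ) := by
    field_simp
  rw [heq] at this
  refine this.congr fun n => ?_
  have h1 : (2 * (n:ℝ) + 1) ≠ 0 := by positivity
  field_simp

lemma tendsto_sqrt_auxA : Tendsto (fun n : ℕ => Real.sqrt ((n : ℝ) * π) * auxA n) atTop (𝓝 1) := by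
  have hc : Tendsto (fun x : ℝ => Real.sqrt x) (𝓝 1) (𝓝 1) := by
    simpa using (Real.continuous_sqrt.tendsto 1)
  have := hc.comp tendsto_npi_auxA_sq
  refine this.congr fun n => ?_
  simp only [Function.comp]
  rw [Real.sqrt_mul (by positivity : (0:ℝ) ≤ (n:ℝ) * π) (auxA n ^ 2),
    Real.sqrt_sq (auxA_pos n).le]


lemma aux_decay {q : ℝ} (hq0 : 0 ≤ q) (hq1 : q < 1) :
    Tendsto (fun n : ℕ => Real.sqrt ((n : ℝ) * π) * q ^ n) atTop (𝓝 0) := by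
  have hsum : Summable (fun n : ℕ => ((n : ℝ) ^ 1 * q ^ n)) := by
    have := summable_norm_pow_mul_geometric_of_norm_lt_one (R := ℝ) 1
      (by rwa [Real.norm_eq_abs, abs_of_nonneg hq0])
    exact this.of_norm
  have hn : Tendsto (fun n : ℕ => (n : ℝ) ^ 1 * q ^ n) atTop (𝓝 0) :=
    hsum.tendsto_atTop_zero
  have hg : Tendsto (fun n : ℕ => Real.sqrt π * ((n : ℝ) ^ 1 * q ^ n)) atTop (𝓝 0) := by
    simpa using hn.const_mul (Real.sqrt π)
  refine squeeze_zero' (Filter.Eventually.of_forall fun n => by positivity) ?_ hg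
  filter_upwards [Filter.eventually_ge_atTop 1] with n hn1
  have h1 : (1 : ℝ) ≤ (n : ℝ) := by exact_mod_cast hn1
  have hs : Real.sqrt ((n : ℝ) * π) = Real.sqrt (n : ℝ) * Real.sqrt π := by
    rw [Real.sqrt_mul (by positivity)]
  have hsn : Real.sqrt (n : ℝ) ≤ (n : ℝ) := by
    nlinarith [Real.sq_sqrt (show (0:ℝ) ≤ (n:ℝ) by positivity),
      Real.sqrt_nonneg ((n : ℝ))]
  have hqn : 0 ≤ q ^ n := by positivity
  rw [hs]
  have : Real.sqrt (n:ℝ) * Real.sqrt π * q ^ n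
      = Real.sqrt π * (Real.sqrt (n:ℝ) * q ^ n) := by ring
  rw [this]
  have := mul_le_mul_of_nonneg_right hsn hqn
  nlinarith [Real.sqrt_nonneg π]

lemma integral_sin_pi_pow (n : ℕ) :
    ∫ x in (0:ℝ)..1, Real.sin (π * x) ^ (2 * n) = auxA n := by
  have h := intervalIntegral.integral_comp_mul_left
    (fun u => Real.sin u ^ (2 * n)) (a := 0) (b := 1) (Real.pi_ne_zero)
  simp only [mul_zero, mul_one] at h
  rw [h, integral_sin_pow_even, smul_eq_mul]
  rw [show (∏ i ∈ Finset.range n, (2 * (i : ℝ) + 1) / (2 * i + 2)) = auxA n from rfl]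
  field_simp

lemma integral_cos_pi_pow_half (n : ℕ) :
    ∫ x in (0:ℝ)..(1/2 : ℝ), Real.cos (π * x) ^ (2 * n) = auxA n / 2 := by
  have hcont : ∀ c : ℝ, Continuous (fun x : ℝ => Real.sin (π * x) ^ (2 * n)) := by
    intro c
    exact (Real.continuous_sin.comp (continuous_const.mul continuous_id)).pow _
  have h1 : ∫ x in (0:ℝ)..(1/2 : ℝ), Real.sin (π * x) ^ (2 * n)
      = ∫ x in (0:ℝ)..(1/2 : ℝ), Real.cos (π * x) ^ (2 * n) := by
    have h := intervalIntegral.integral_comp_sub_left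
      (fun x : ℝ => Real.sin (π * x) ^ (2 * n)) (a := 0) (b := 1/2) (1/2)
    norm_num at h
    rw [← h]
    refine intervalIntegral.integral_congr fun x _ => ?_
    have : π * (1/2 - x) = π / 2 - π * x := by ring
    rw [this, Real.sin_pi_div_two_sub]
  have h2 : ∫ x in (1/2 : ℝ)..1, Real.sin (π * x) ^ (2 * n)
      = ∫ x in (0:ℝ)..(1/2 : ℝ), Real.sin (π * x) ^ (2 * n) := by
    have h := intervalIntegral.integral_comp_sub_left
      (fun x : ℝ => Real.sin (π * x) ^ (2 * n)) (a := 0) (b := 1/2) 1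
    norm_num at h
    rw [← h]
    refine intervalIntegral.integral_congr fun x _ => ?_
    have : π * (1 - x) = π - π * x := by ring
    rw [this, Real.sin_pi_sub]
  have h3 : (∫ x in (0:ℝ)..(1/2 : ℝ), Real.sin (π * x) ^ (2 * n))
      + ∫ x in (1/2 : ℝ)..1, Real.sin (π * x) ^ (2 * n)
      = ∫ x in (0:ℝ)..1, Real.sin (π * x) ^ (2 * n) :=
    intervalIntegral.integral_add_adjacent_intervals
      ((hcont 0).intervalIntegrable _ _) ((hcont 0).intervalIntegrable _ _)
  rw [h2, h1, integral_sin_pi_pow] at h3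
  linarith

lemma half_tendsto (g : ℝ → ℝ) (hg : IntegrableOn g (Set.Icc 0 (1/2 : ℝ)))
    (hc : ContinuousWithinAt g (Set.Icc 0 (1/2 : ℝ)) 0) :
    Tendsto (fun n : ℕ => ∫ x in Set.Icc (0:ℝ) (1/2 : ℝ),
        g x * (Real.sqrt ((n : ℝ) * π) * Real.cos (π * x) ^ (2 * n)))
      atTop (𝓝 (g 0 / 2)) := by
  set φ : ℕ → ℝ → ℝ :=
    fun n x => 2 * (Real.sqrt ((n : ℝ) * π) * Real.cos (π * x) ^ (2 * n)) with hφ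
  have hφcont : ∀ n, Continuous (φ n) := fun n =>
    continuous_const.mul (continuous_const.mul
      ((Real.continuous_cos.comp (continuous_const.mul continuous_id)).pow _))
  have hnφ : ∀ᶠ n : ℕ in atTop, ∀ x ∈ Set.Icc (0:ℝ) (1/2 : ℝ), 0 ≤ φ n x :=
    Filter.Eventually.of_forall fun n x _ =>
      mul_nonneg (by norm_num) (mul_nonneg (Real.sqrt_nonneg _)
        ((even_two_mul n).pow_nonneg _))
  have hiφ : Tendsto (fun n : ℕ => ∫ x in Set.Icc (0:ℝ) (1/2 : ℝ), φ n x) atTop (𝓝 1) := by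
    have heq : ∀ n : ℕ, (∫ x in Set.Icc (0:ℝ) (1/2 : ℝ), φ n x)
        = Real.sqrt ((n : ℝ) * π) * auxA n := by
      intro n
      rw [MeasureTheory.integral_Icc_eq_integral_Ioc,
        ← intervalIntegral.integral_of_le (by norm_num : (0:ℝ) ≤ 1/2)]
      rw [hφ]
      rw [intervalIntegral.integral_const_mul, intervalIntegral.integral_const_mul,
        integral_cos_pi_pow_half]
      ring
    simp only [heq]
    exact tendsto_sqrt_auxA
  have hlφ : ∀ u : Set ℝ, IsOpen u → (0:ℝ) ∈ u →
      TendstoUniformlyOn φ 0 atTop (Set.Icc (0:ℝ) (1/2 : ℝ) \ u) := by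
    intro u hu h0u
    obtain ⟨δ, hδpos, hδ⟩ := Metric.isOpen_iff.mp hu 0 h0u
    set ε := min δ (1/2 : ℝ) with hε
    have hεpos : 0 < ε := lt_min hδpos (by norm_num)
    have hεle : ε ≤ 1/2 := min_le_right _ _
    set r := Real.cos (π * ε) with hr
    have hπε0 : 0 < π * ε := mul_pos Real.pi_pos hεpos
    have hπεle : π * ε ≤ π / 2 := by nlinarith [Real.pi_pos]
    have hr0 : 0 ≤ r :=
      Real.cos_nonneg_of_mem_Icc ⟨by linarith [Real.pi_pos], hπεle⟩
    have hr1 : r < 1 := by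
      have := Real.strictAntiOn_cos (Set.mem_Icc.mpr ⟨le_rfl, Real.pi_pos.le⟩)
        (Set.mem_Icc.mpr ⟨hπε0.le, by linarith [Real.pi_pos]⟩) hπε0
      simpa using this
    have hr2 : r ^ 2 < 1 := by nlinarith
    have hr2' : 0 ≤ r ^ 2 := by positivity
    have hb : Tendsto (fun n : ℕ => 2 * (Real.sqrt ((n : ℝ) * π) * (r ^ 2) ^ n))
        atTop (𝓝 0) := by
      simpa using (aux_decay hr2' hr2).const_mul 2
    rw [Metric.tendstoUniformlyOn_iff]
    intro e he
    filter_upwards [(tendsto_order.1 hb).2 e he] with n hn x hx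
    obtain ⟨⟨hx0, hx12⟩, hxu⟩ := hx
    have hxδ : δ ≤ x := by
      by_contra hlt
      push_neg at hlt
      have hmem : x ∈ Metric.ball (0:ℝ) δ := by
        rw [Metric.mem_ball, Real.dist_eq, sub_zero, abs_of_nonneg hx0]
        exact hlt
      exact hxu (hδ hmem)
    have hxε : ε ≤ x := le_trans (min_le_left _ _) hxδ
    have hcosx0 : 0 ≤ Real.cos (π * x) :=
      Real.cos_nonneg_of_mem_Icc ⟨by nlinarith [Real.pi_pos], by nlinarith [Real.pi_pos]⟩
    have hcosle : Real.cos (π * x) ≤ r := by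
      rcases eq_or_lt_of_le hxε with h | h
      · rw [hr, ← h]
      · exact (Real.strictAntiOn_cos
          (Set.mem_Icc.mpr ⟨hπε0.le, by nlinarith [Real.pi_pos]⟩)
          (Set.mem_Icc.mpr ⟨by positivity, by nlinarith [Real.pi_pos]⟩)
          (by nlinarith [Real.pi_pos])).le
    have hpow : Real.cos (π * x) ^ (2 * n) ≤ (r ^ 2) ^ n := by
      rw [← pow_mul]
      exact pow_le_pow_left₀ hcosx0 hcosle _
    have hφle : φ n x ≤ 2 * (Real.sqrt ((n : ℝ) * π) * (r ^ 2) ^ n) := by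
      have h := mul_le_mul_of_nonneg_left hpow (Real.sqrt_nonneg ((n : ℝ) * π))
      show 2 * (Real.sqrt ((n : ℝ) * π) * Real.cos (π * x) ^ (2 * n)) ≤ _
      linarith
    have hφ0 : 0 ≤ φ n x :=
      mul_nonneg (by norm_num) (mul_nonneg (Real.sqrt_nonneg _)
        ((even_two_mul n).pow_nonneg _))
    calc dist ((0 : ℝ → ℝ) x) (φ n x) = φ n x := by
          simp [Real.dist_eq, abs_of_nonneg hφ0]
      _ ≤ 2 * (Real.sqrt ((n : ℝ) * π) * (r ^ 2) ^ n) := hφle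
      _ < e := hn
  have key := tendsto_setIntegral_peak_smul_of_integrableOn_of_tendsto
    (μ := volume) (s := Set.Icc (0:ℝ) (1/2 : ℝ)) (t := Set.Icc (0:ℝ) (1/2 : ℝ)) (x₀ := (0:ℝ))
    measurableSet_Icc measurableSet_Icc subset_rfl self_mem_nhdsWithin
    measure_Icc_lt_top.ne hnφ hlφ hiφ
    (Filter.Eventually.of_forall fun n => (hφcont n).aestronglyMeasurable)
    hg hc
  have key2 := key.div_const 2
  refine key2.congr fun n => ?_
  have heq : ∀ x : ℝ, φ n x • g x
      = 2 * (g x * (Real.sqrt ((n : ℝ) * π) * Real.cos (π * x) ^ (2 * n))) := by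
    intro x
    rw [hφ, smul_eq_mul]
    ring
  simp only [heq]
  rw [integral_const_mul]
  ring
theorem stmt_6 (f : ℝ → ℝ) (hf : IntegrableOn f (Set.Icc 0 1))
    (hcont0 : ContinuousAt f 0) (hcont1 : ContinuousAt f 1) :
    Tendsto (fun n : ℕ =>
        ∫ x in (0:ℝ)..1, f x * (Real.sqrt (n * π) * (Real.cos (π * x)) ^ (2 * n)))
      atTop (𝓝 ((f 0 + f 1) / 2)) := by
  have h01 : (0:ℝ) ≤ 1 := zero_le_one
  have hfi : IntervalIntegrable f volume 0 1 := by
    rw [intervalIntegrable_iff_integrableOn_Icc_of_le h01]; exact hf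
  have hsub1 : Set.uIcc (0:ℝ) (1/2) ⊆ Set.uIcc (0:ℝ) 1 := by
    rw [Set.uIcc_of_le (by norm_num : (0:ℝ) ≤ 1/2), Set.uIcc_of_le h01]
    exact Set.Icc_subset_Icc le_rfl (by norm_num)
  have hsub2 : Set.uIcc (1/2 : ℝ) 1 ⊆ Set.uIcc (0:ℝ) 1 := by
    rw [Set.uIcc_of_le (by norm_num : (1/2:ℝ) ≤ 1), Set.uIcc_of_le h01]
    exact Set.Icc_subset_Icc (by norm_num) le_rfl
  have hf' : IntegrableOn f (Set.Icc (0:ℝ) (1/2)) :=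
    hf.mono_set (Set.Icc_subset_Icc le_rfl (by norm_num))
  have h0 := half_tendsto f hf' hcont0.continuousWithinAt
  set g : ℝ → ℝ := fun x => f (1 - x) with hgdef
  have hgint : IntegrableOn g (Set.Icc (0:ℝ) (1/2)) := by
    have h := (hfi.comp_sub_left 1).symm
    norm_num at h
    have h2 := h.mono_set hsub1
    rw [intervalIntegrable_iff_integrableOn_Icc_of_le (by norm_num : (0:ℝ) ≤ 1/2)] at h2
    exact h2
  have hgc : ContinuousWithinAt g (Set.Icc (0:ℝ) (1/2)) 0 := by
    have hca : ContinuousAt g 0 := by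
      have hc : ContinuousAt (fun x : ℝ => 1 - x) 0 :=
        (continuous_const.sub continuous_id).continuousAt
      exact ContinuousAt.comp
        (show ContinuousAt f ((fun x : ℝ => 1 - x) 0) by simpa using hcont1) hc
    exact hca.continuousWithinAt
  have h1 := half_tendsto g hgint hgc
  have key : ∀ n : ℕ,
      (∫ x in Set.Icc (0:ℝ) (1/2),
          f x * (Real.sqrt ((n:ℝ) * π) * Real.cos (π * x) ^ (2 * n)))
        + (∫ x in Set.Icc (0:ℝ) (1/2),
          g x * (Real.sqrt ((n:ℝ) * π) * Real.cos (π * x) ^ (2 * n)))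
      = ∫ x in (0:ℝ)..1, f x * (Real.sqrt ((n:ℝ) * π) * Real.cos (π * x) ^ (2 * n)) := by
    intro n
    set F : ℝ → ℝ := fun x => f x * (Real.sqrt ((n:ℝ) * π) * Real.cos (π * x) ^ (2 * n))
      with hF
    have hψc : Continuous (fun x : ℝ => Real.sqrt ((n:ℝ) * π) * Real.cos (π * x) ^ (2 * n)) :=
      continuous_const.mul
        ((Real.continuous_cos.comp (continuous_const.mul continuous_id)).pow _)
    have hFi : IntervalIntegrable F volume 0 1 := hfi.mul_continuousOn hψc.continuousOn
    have hadd := intervalIntegral.integral_add_adjacent_intervals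
      (hFi.mono_set hsub1) (hFi.mono_set hsub2)
    rw [← hadd]
    congr 1
    · rw [intervalIntegral.integral_of_le (by norm_num : (0:ℝ) ≤ 1/2),
        ← MeasureTheory.integral_Icc_eq_integral_Ioc]
    · have hrefl : ∀ x : ℝ, F (1 - x)
          = g x * (Real.sqrt ((n:ℝ) * π) * Real.cos (π * x) ^ (2 * n)) := by
        intro x
        rw [hF, hgdef]
        simp only
        have hx : π * (1 - x) = π - π * x := by ring
        rw [hx, Real.cos_pi_sub, (even_two_mul n).neg_pow]
      have h : (∫ x in (1/2:ℝ)..1, F x) = ∫ x in (0:ℝ)..(1/2), F (1 - x) := by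
        rw [intervalIntegral.integral_comp_sub_left F 1]
        norm_num
      rw [h]
      rw [intervalIntegral.integral_of_le (by norm_num : (0:ℝ) ≤ 1/2),
        ← MeasureTheory.integral_Icc_eq_integral_Ioc]
      exact setIntegral_congr_fun measurableSet_Icc fun x _ => (hrefl x).symm
  have hsum := h0.add h1
  have hval : f 0 / 2 + g 0 / 2 = (f 0 + f 1) / 2 := by
    rw [hgdef]
    norm_num
    ring
  rw [hval] at hsum
  exact hsum.congr fun n => key n
end

section
/- lim_{n→∞} √(nπ) ∫_{−1/2}^{1/2} cos^{2n}(πx) dx = 1. -/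
open Filter Topology Real

open Finset in
lemma aux_int_eq (n : ℕ) :
    (∫ x in (-(1:ℝ)/2)..(1/2), (Real.cos (π * x)) ^ (2 * n))
      = ∏ i ∈ range n, (2 * (i:ℝ) + 1) / (2 * i + 2) := by
  have h1 : (∫ x in (-(1:ℝ)/2)..(1/2), (Real.cos (π * x)) ^ (2 * n))
      = π⁻¹ • ∫ u in (π * (-(1:ℝ)/2))..(π * (1/2)), (Real.cos u) ^ (2 * n) := by
    rw [intervalIntegral.integral_comp_mul_left (fun u => Real.cos u ^ (2*n)) pi_ne_zero]
  have h2 : (∫ x in (0:ℝ)..π, (Real.sin x) ^ (2 * n))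
      = ∫ u in (π * (-(1:ℝ)/2))..(π * (1/2)), (Real.cos u) ^ (2 * n) := by
    have : ∀ x : ℝ, (Real.sin x) ^ (2*n) = Real.cos (x - π/2) ^ (2*n) := by
      intro x; rw [Real.cos_sub_pi_div_two]
    simp_rw [this]
    rw [intervalIntegral.integral_comp_sub_right (fun u => Real.cos u ^ (2*n)) (π/2)]
    norm_num
    ring_nf
  rw [h1, ← h2, integral_sin_pow_even, smul_eq_mul, inv_mul_cancel_left₀ pi_ne_zero]

open Finset in
lemma aux_prod_sq (n : ℕ) :
    (∏ i ∈ range n, (2 * (i:ℝ) + 1) / (2 * i + 2)) ^ 2 * Real.Wallis.W n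
      = 1 / (2 * n + 1) := by
  induction n with
  | zero => simp [Real.Wallis.W]
  | succ k ih =>
    rw [prod_range_succ, Real.Wallis.W_succ, mul_pow]
    push_cast
    have h1 : (2 * (k:ℝ) + 1) ≠ 0 := by positivity
    have h2 : (2 * (k:ℝ) + 2) ≠ 0 := by positivity
    have h3 : (2 * (k:ℝ) + 3) ≠ 0 := by positivity
    have : ((2 * (k:ℝ) + 1) / (2 * k + 2)) ^ 2 *
        ((2 * k + 2) / (2 * k + 1) * ((2 * k + 2) / (2 * k + 3)))
        = (2 * k + 1) / (2 * k + 3) := by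
      field_simp
    calc (∏ i ∈ range k, (2 * (i:ℝ) + 1) / (2 * i + 2)) ^ 2 *
          ((2 * (k:ℝ) + 1) / (2 * k + 2)) ^ 2 *
          (Real.Wallis.W k * ((2 * k + 2) / (2 * k + 1) * ((2 * k + 2) / (2 * k + 3))))
        = ((∏ i ∈ range k, (2 * (i:ℝ) + 1) / (2 * i + 2)) ^ 2 * Real.Wallis.W k) *
          (((2 * (k:ℝ) + 1) / (2 * k + 2)) ^ 2 *
            ((2 * k + 2) / (2 * k + 1) * ((2 * k + 2) / (2 * k + 3)))) := by ring
      _ = (1 / (2 * (k:ℝ) + 1)) * ((2 * k + 1) / (2 * k + 3)) := by rw [ih, this]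
      _ = 1 / (2 * ((k:ℝ) + 1) + 1) := by field_simp; ring

theorem stmt_8 :
    Tendsto (fun n : ℕ =>
        Real.sqrt (n * π) * ∫ x in (-(1:ℝ)/2)..(1/2), (Real.cos (π * x)) ^ (2 * n))
      atTop (𝓝 1) := by
  have hW := Real.Wallis.tendsto_W_nhds_pi_div_two
  -- the sequence rewritten
  have key : ∀ n : ℕ, Real.sqrt (n * π) *
      ∫ x in (-(1:ℝ)/2)..(1/2), (Real.cos (π * x)) ^ (2 * n)
      = Real.sqrt ((n * π) / ((2 * n + 1) * Real.Wallis.W n)) := by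
    intro n
    rw [aux_int_eq]
    have hp : (0:ℝ) ≤ ∏ i ∈ Finset.range n, (2 * (i:ℝ) + 1) / (2 * i + 2) :=
      Finset.prod_nonneg fun i _ => by positivity
    rw [← Real.sqrt_sq hp, ← Real.sqrt_mul (by positivity)]
    congr 1
    have hW0 : Real.Wallis.W n ≠ 0 := (Real.Wallis.W_pos n).ne'
    have h21 : (2 * (n:ℝ) + 1) ≠ 0 := by positivity
    have := aux_prod_sq n
    have hsq : (∏ i ∈ Finset.range n, (2 * (i:ℝ) + 1) / (2 * i + 2)) ^ 2
        = 1 / ((2 * n + 1) * Real.Wallis.W n) := by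
      field_simp at this ⊢
      linarith [this]
    rw [hsq]
    ring
  simp_rw [key]
  have h1 : Tendsto (fun n : ℕ => ((n:ℝ) * π) / ((2 * n + 1) * Real.Wallis.W n)) atTop (𝓝 1) := by
    have hA : Tendsto (fun n : ℕ => (n:ℝ) / (2 * n + 1)) atTop (𝓝 (1/2)) := by
      have : (fun n : ℕ => (n:ℝ) / (2 * n + 1)) =ᶠ[atTop] fun n : ℕ => 1 / (2 + 1 / n) := by
        filter_upwards [eventually_gt_atTop 0] with n hn
        have hn' : (n:ℝ) ≠ 0 := Nat.cast_ne_zero.mpr hn.ne'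
        field_simp
      rw [tendsto_congr' this]
      have : Tendsto (fun n : ℕ => 2 + 1 / (n:ℝ)) atTop (𝓝 (2 + 0)) :=
        tendsto_const_nhds.add (tendsto_one_div_atTop_nhds_zero_nat)
      have h := (tendsto_const_nhds : Tendsto (fun _ : ℕ => (1:ℝ)) atTop (𝓝 1)).div this
        (by norm_num : (2:ℝ) + 0 ≠ 0)
      have h' : Tendsto (fun n : ℕ => 1 / (2 + 1/(n:ℝ))) atTop (𝓝 (1/(2+0))) := h
      simpa using h'
    have hB : Tendsto (fun n : ℕ => π / Real.Wallis.W n) atTop (𝓝 (π / (π/2))) :=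
      tendsto_const_nhds.div hW (by positivity)
    have heq : ∀ n : ℕ, ((n:ℝ) * π) / ((2 * n + 1) * Real.Wallis.W n)
        = ((n:ℝ) / (2 * n + 1)) * (π / Real.Wallis.W n) := by
      intro n; exact (div_mul_div_comm _ _ _ _).symm
    simp_rw [heq]
    have := hA.mul hB
    have hval : (1/2 : ℝ) * (π / (π/2)) = 1 := by
      field_simp
    rwa [hval] at this
  have := (Real.continuous_sqrt.tendsto 1).comp h1
  simpa [Function.comp_def] using this
end

section
/- For every real α > 1, lim_{m→∞} ∑_{k=1}^m ((1/k − 1/(4·m!))^α − 1/k^α) = 0. -/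
open Filter Topology

lemma rpow_sub_rpow_le_aux (α : ℝ) (hα : 1 ≤ α) {a b : ℝ} (ha : 0 ≤ a) (hab : a ≤ b)
    (hb : b ≤ 1) : b ^ α - a ^ α ≤ α * (b - a) := by
  rcases eq_or_lt_of_le (ha.trans hab) with rfl | hbpos
  · have : a = 0 := le_antisymm hab ha
    simp [this]
  · set s : ℝ := a / b - 1 with hs
    have hs1 : -1 ≤ s := by
      rw [hs]
      have : 0 ≤ a / b := div_nonneg ha hbpos.le
      linarith
    have hbern := one_add_mul_self_le_rpow_one_add hs1 hα
    have h1s : 1 + s = a / b := by ring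
    rw [h1s] at hbern
    have hba : (a / b) ^ α = a ^ α / b ^ α := Real.div_rpow ha hbpos.le α
    rw [hba] at hbern
    have hbpow : 0 < b ^ α := Real.rpow_pos_of_pos hbpos _
    have h2 : (1 + α * s) * b ^ α ≤ a ^ α := by
      calc (1 + α * s) * b ^ α ≤ a ^ α / b ^ α * b ^ α :=
            mul_le_mul_of_nonneg_right hbern hbpow.le
        _ = a ^ α := by field_simp
    have h3 : b ^ α - a ^ α ≤ α * (1 - a / b) * b ^ α := by
      have : (1 + α * s) * b ^ α = b ^ α - α * (1 - a / b) * b ^ α := by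
        rw [hs]; ring
      linarith [h2, this ▸ h2]
    have h4 : α * (1 - a / b) * b ^ α = α * (b - a) * b ^ (α - 1) := by
      rw [show α - 1 = α + (-1) by ring, Real.rpow_add hbpos, Real.rpow_neg_one]
      field_simp
    have h5 : b ^ (α - 1) ≤ 1 := Real.rpow_le_one (ha.trans hab) hb (by linarith)
    have h6 : 0 ≤ α * (b - a) := mul_nonneg (by linarith) (by linarith)
    calc b ^ α - a ^ α ≤ α * (b - a) * b ^ (α - 1) := by rw [← h4]; exact h3
      _ ≤ α * (b - a) * 1 := mul_le_mul_of_nonneg_left h5 h6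
      _ = α * (b - a) := by ring

theorem stmt_16 (α : ℝ) (hα : 1 < α) :
    Tendsto (fun m : ℕ =>
        ∑ k ∈ Finset.Icc 1 m,
          ((1 / (k : ℝ) - 1 / (4 * (m.factorial : ℝ))) ^ α - (1 / (k : ℝ)) ^ α))
      atTop (𝓝 0) := by
  have hg : Tendsto (fun m : ℕ => α * ((2 : ℝ) ^ m / (m.factorial : ℝ))) atTop (𝓝 0) := by
    have := (FloorSemiring.tendsto_pow_div_factorial_atTop (2 : ℝ)).const_mul α
    simpa using this
  apply squeeze_zero_norm' _ hg
  filter_upwards [eventually_ge_atTop 1] with m hm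
  have hfacpos : (0 : ℝ) < (m.factorial : ℝ) := by positivity
  have hterm : ∀ k ∈ Finset.Icc 1 m,
      ‖(1 / (k : ℝ) - 1 / (4 * (m.factorial : ℝ))) ^ α - (1 / (k : ℝ)) ^ α‖
        ≤ α * (1 / (4 * (m.factorial : ℝ))) := by
    intro k hk
    simp only [Finset.mem_Icc] at hk
    have hk1 : (1 : ℝ) ≤ (k : ℝ) := by exact_mod_cast hk.1
    have hkpos : (0 : ℝ) < (k : ℝ) := by linarith
    have hkm : (k : ℝ) ≤ (m.factorial : ℝ) := by
      exact_mod_cast hk.2.trans m.self_le_factorial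
    set a : ℝ := 1 / (k : ℝ) - 1 / (4 * (m.factorial : ℝ)) with hadef
    set b : ℝ := 1 / (k : ℝ) with hbdef
    have ha : 0 ≤ a := by
      rw [hadef, sub_nonneg]
      apply one_div_le_one_div_of_le hkpos
      linarith
    have hab : a ≤ b := by
      rw [hadef, hbdef]
      have : 0 < 1 / (4 * (m.factorial : ℝ)) := by positivity
      linarith
    have hb1 : b ≤ 1 := by
      rw [hbdef]
      exact div_le_one_of_le₀ hk1 (by linarith)
    have hle : a ^ α ≤ b ^ α := Real.rpow_le_rpow ha hab (by linarith)
    have hkey := rpow_sub_rpow_le_aux α hα.le ha hab hb1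
    have hba : b - a = 1 / (4 * (m.factorial : ℝ)) := by rw [hadef, hbdef]; ring
    rw [Real.norm_eq_abs, abs_sub_comm, abs_of_nonneg (by linarith)]
    rw [hba] at hkey
    linarith
  calc ‖∑ k ∈ Finset.Icc 1 m,
          ((1 / (k : ℝ) - 1 / (4 * (m.factorial : ℝ))) ^ α - (1 / (k : ℝ)) ^ α)‖
      ≤ ∑ k ∈ Finset.Icc 1 m, ‖(1 / (k : ℝ) - 1 / (4 * (m.factorial : ℝ))) ^ α
          - (1 / (k : ℝ)) ^ α‖ := norm_sum_le _ _
    _ ≤ ∑ k ∈ Finset.Icc 1 m, α * (1 / (4 * (m.factorial : ℝ))) :=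
        Finset.sum_le_sum hterm
    _ = (m : ℝ) * (α * (1 / (4 * (m.factorial : ℝ)))) := by
        rw [Finset.sum_const, Nat.card_Icc]; simp
    _ ≤ α * ((2 : ℝ) ^ m / (m.factorial : ℝ)) := by
        have hm2 : (m : ℝ) ≤ (2 : ℝ) ^ m := by
          exact_mod_cast (Nat.lt_two_pow_self (n := m)).le
        have hαpos : (0 : ℝ) < α := by linarith
        have h1 : (1:ℝ) / (4 * (m.factorial : ℝ)) ≤ 1 / (m.factorial : ℝ) := by
          apply one_div_le_one_div_of_le hfacpos; linarith
        calc (m : ℝ) * (α * (1 / (4 * (m.factorial : ℝ))))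
            ≤ (2:ℝ) ^ m * (α * (1 / ((m.factorial : ℝ)))) := by
              apply mul_le_mul hm2 (by
                exact mul_le_mul_of_nonneg_left h1 hαpos.le) (by positivity) (by positivity)
          _ = α * ((2:ℝ) ^ m / (m.factorial : ℝ)) := by ring
end
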